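/- There exists a group G of order 240 isomorphic to a semidirect product A_5 ⋊ C_4 such that G/Z(G) ≅ S_5 but G contains no subgroup isomorphic to S_5. -/
import Mathlib


/-- The properties required of the group in Statement 7: order 240,
isomorphic to a semidirect product A₅ ⋊ C₄, with G/Z(G) ≅ S₅ but containing
no subgroup isomorphic to S₅. -/
def Stmt7Prop (G : Type) [Group G] : Prop :=
  Nat.card G = 240 ∧
  (∃ φ : Multiplicative (ZMod 4) →* MulAut (alternatingGroup (Fin 5)),
    Nonempty (G ≃* alternatingGroup (Fin 5) ⋊[φ] Multiplicative (ZMod 4))) ∧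
  (∃ f : G →* Equiv.Perm (Fin 5),
    Function.Surjective f ∧ f.ker = Subgroup.center G) ∧
  ¬ ∃ H : Subgroup G, Nonempty (H ≃* Equiv.Perm (Fin 5))

open Equiv Equiv.Perm SemidirectProduct Subgroup

namespace Stmt7Aux

abbrev S := Equiv.Perm (Fin 5)
abbrev A : Subgroup S := alternatingGroup (Fin 5)
abbrev C := Multiplicative (ZMod 4)

def σ : S := Equiv.swap 0 1

lemma hσ2 : σ * σ = 1 := Equiv.swap_mul_self _ _

lemma hσ4 : σ ^ 4 = 1 := by
  have : σ ^ 4 = (σ * σ) * (σ * σ) := by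
    rw [pow_succ, pow_succ, pow_succ, pow_one, mul_assoc]
  rw [this, hσ2, one_mul]

lemma pow_mod (n : ℕ) : σ ^ n = σ ^ (n % 4) := by
  conv_lhs => rw [← Nat.div_add_mod n 4]
  rw [pow_add, pow_mul, hσ4, one_pow, one_mul]

lemma sign_σ : Equiv.Perm.sign σ = -1 := by
  simp [σ]

def ψ : C →* S where
  toFun k := σ ^ (Multiplicative.toAdd k).val
  map_one' := by simp [ZMod.val_zero]
  map_mul' a b := by
    show σ ^ (Multiplicative.toAdd a + Multiplicative.toAdd b).val = _
    rw [ZMod.val_add, ← pow_mod, pow_add]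

def φ : C →* MulAut A := MulAut.conjNormal.comp ψ

abbrev G := A ⋊[φ] C

lemma compat : ∀ g : C, A.subtype.comp (φ g).toMonoidHom
    = (MulAut.conj (ψ g)).toMonoidHom.comp A.subtype := by
  intro g; ext n; simp [φ, MulAut.conjNormal_apply]

def f : G →* S := SemidirectProduct.lift A.subtype ψ compat

lemma f_apply (x : G) :
    f x = (x.left : S) * σ ^ (Multiplicative.toAdd x.right).val := rfl

lemma f_surj : Function.Surjective f := by
  intro p
  by_cases hp : Equiv.Perm.sign p = 1
  · exact ⟨inl ⟨p, mem_alternatingGroup.2 hp⟩, by simp [f]⟩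
  · have hp' : Equiv.Perm.sign p = -1 := by
      rcases Int.units_eq_one_or (Equiv.Perm.sign p) with h | h
      · exact absurd h hp
      · exact h
    have hps : Equiv.Perm.sign (p * σ⁻¹) = 1 := by
      rw [map_mul, map_inv, sign_σ, hp']; decide
    refine ⟨inl ⟨p * σ⁻¹, mem_alternatingGroup.2 hps⟩ * inr (Multiplicative.ofAdd 1), ?_⟩
    have h1 : f (inr (Multiplicative.ofAdd (1 : ZMod 4)) : G) = σ := by
      show σ ^ (1 : ZMod 4).val = σ
      rw [show (1 : ZMod 4).val = 1 from rfl, pow_one]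
    rw [map_mul, h1]
    simp [f]

/-- The central element. -/
def z : G := ⟨1, Multiplicative.ofAdd 2⟩

lemma z_ne_one : z ≠ 1 := by
  intro h
  have : (Multiplicative.ofAdd (2 : ZMod 4)) = (1 : C) := congrArg SemidirectProduct.right h
  have h2 : (2 : ZMod 4) = 0 := this
  exact absurd h2 (by decide)

lemma φ_two : φ (Multiplicative.ofAdd (2 : ZMod 4)) = 1 := by
  have : ψ (Multiplicative.ofAdd (2 : ZMod 4)) = 1 := by
    show σ ^ (2 : ZMod 4).val = 1
    rw [show (2 : ZMod 4).val = 2 from rfl, sq, hσ2]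
  simp [φ, this]

lemma z_mem_center : z ∈ center G := by
  rw [Subgroup.mem_center_iff]
  intro y
  refine SemidirectProduct.ext ?_ ?_
  · show y.left * (φ y.right) z.left = z.left * (φ z.right) y.left
    show y.left * (φ y.right) 1 = 1 * (φ (Multiplicative.ofAdd 2)) y.left
    rw [map_one, mul_one, φ_two, one_mul]; rfl
  · show y.right * z.right = z.right * y.right
    exact mul_comm _ _

lemma sign_f (x : G) :
    Equiv.Perm.sign (f x) = (-1) ^ (Multiplicative.toAdd x.right).val := by
  rw [f_apply, map_mul, map_pow, sign_σ]
  have : Equiv.Perm.sign (x.left : S) = 1 := mem_alternatingGroup.1 x.left.2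
  rw [this, one_mul]

lemma mem_ker_iff (x : G) : x ∈ f.ker ↔ x = 1 ∨ x = z := by
  constructor
  · intro hx
    rw [MonoidHom.mem_ker] at hx
    have hsign : ((-1 : ℤˣ)) ^ (Multiplicative.toAdd x.right).val = 1 := by
      rw [← sign_f, hx, map_one]
    set k : ZMod 4 := Multiplicative.toAdd x.right with hk
    have hcase : k = 0 ∨ k = 2 := by
      have : ∀ m : ZMod 4, ((-1 : ℤˣ)) ^ m.val = 1 → m = 0 ∨ m = 2 := by decide
      exact this k hsign
    have hfx : (x.left : S) * σ ^ k.val = 1 := hx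
    rcases hcase with h | h
    · left
      refine SemidirectProduct.ext ?_ ?_
      · have : σ ^ k.val = 1 := by rw [h, ZMod.val_zero, pow_zero]
        rw [this, mul_one] at hfx
        exact Subtype.ext hfx
      · show x.right = 1
        have : Multiplicative.toAdd x.right = 0 := h
        exact this
    · right
      refine SemidirectProduct.ext ?_ ?_
      · have : σ ^ k.val = 1 := by
          rw [h, show (2 : ZMod 4).val = 2 from rfl, sq, hσ2]
        rw [this, mul_one] at hfx
        exact Subtype.ext hfx
      · show x.right = Multiplicative.ofAdd 2
        have : Multiplicative.toAdd x.right = 2 := h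
        exact this
  · rintro (rfl | rfl)
    · exact f.map_one
    · show (1 : S) * σ ^ (2 : ZMod 4).val = 1
      rw [one_mul, show (2 : ZMod 4).val = 2 from rfl, sq, hσ2]

set_option maxRecDepth 20000 in
lemma perm_center_trivial : ∀ s : S, (∀ g : S, g * s = s * g) → s = 1 := by decide

lemma ker_eq_center : f.ker = center G := by
  ext x
  constructor
  · intro hx
    rcases (mem_ker_iff x).1 hx with rfl | rfl
    · exact Subgroup.one_mem _
    · exact z_mem_center
  · intro hx
    rw [mem_ker_iff]
    rw [Subgroup.mem_center_iff] at hx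
    have hc : ∀ s : S, s * f x = f x * s := by
      intro s
      obtain ⟨g, rfl⟩ := f_surj s
      rw [← map_mul, ← map_mul, hx g]
    have : f x = 1 := perm_center_trivial _ hc
    -- x ∈ ker
    have hk : x ∈ f.ker := this
    rcases (mem_ker_iff x).1 hk with h | h
    · exact Or.inl h
    · exact Or.inr h

lemma card_G : Nat.card G = 240 := by
  have e : G ≃ A × C :=
    ⟨fun x => (x.left, x.right), fun p => ⟨p.1, p.2⟩,
     fun x => rfl, fun p => rfl⟩
  rw [Nat.card_congr e, Nat.card_prod]
  have hA : Nat.card A = 60 := by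
    have h := @two_mul_card_alternatingGroup (Fin 5) _ _ _
    rw [Fintype.card_perm, Fintype.card_fin] at h
    rw [Nat.card_eq_fintype_card]
    rw [show Nat.factorial 5 = 120 from rfl] at h
    show Fintype.card (alternatingGroup (Fin 5)) = 60
    omega
  have hC : Nat.card C = 4 := by simp [Nat.card_eq_fintype_card]
  rw [hA, hC]

lemma no_S5 : ¬ ∃ H : Subgroup G, Nonempty (H ≃* S) := by
  rintro ⟨H, ⟨e⟩⟩
  by_cases hz : z ∈ H
  · -- z gives a nontrivial central element of H ≅ S₅
    set w : H := ⟨z, hz⟩ with hw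
    have hcent : ∀ s : S, s * e w = e w * s := by
      intro s
      obtain ⟨h, rfl⟩ := e.surjective s
      rw [← map_mul, ← map_mul]
      congr 1
      exact Subtype.ext ((Subgroup.mem_center_iff.1 z_mem_center) h.1)
    have : e w = 1 := perm_center_trivial _ fun g => hcent g
    have : w = 1 := by
      apply e.injective; rw [this, map_one]
    exact z_ne_one (congrArg Subtype.val this)
  · -- f restricted to H is injective, hence bijective, giving a preimage of σ
    set fH : H →* S := f.comp H.subtype with hfH
    have hinj : Function.Injective fH := by
      rw [injective_iff_map_eq_one]
      intro a ha
      have : (a : G) ∈ f.ker := ha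
      rcases (mem_ker_iff _).1 this with h | h
      · exact Subtype.ext h
      · exact absurd (h ▸ a.2) hz
    have hcard : Nat.card H = Nat.card S := Nat.card_congr e.toEquiv
    have hbij : Function.Bijective fH :=
      (Nat.bijective_iff_injective_and_card fH).2 ⟨hinj, hcard⟩
    obtain ⟨h, hh⟩ := hbij.2 σ
    -- h has odd "right" component
    have hsign : ((-1 : ℤˣ)) ^ (Multiplicative.toAdd (h : G).right).val = -1 := by
      rw [← sign_f]
      show Equiv.Perm.sign (fH h) = -1
      rw [hh, sign_σ]
    set k : ZMod 4 := Multiplicative.toAdd (h : G).right with hk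
    have hkk : k + k = 2 := by
      have : ∀ m : ZMod 4, ((-1 : ℤˣ)) ^ m.val = -1 → m + m = 2 := by decide
      exact this k hsign
    -- h² is in the kernel
    have hsq : ((h : G) ^ 2) ∈ f.ker := by
      rw [MonoidHom.mem_ker, map_pow]
      show (fH h) ^ 2 = 1
      rw [hh, sq, hσ2]
    have hright : ((h : G) ^ 2).right = Multiplicative.ofAdd 2 := by
      have : ((h : G) ^ 2).right = (h : G).right * (h : G).right := by
        rw [sq, mul_right]
      rw [this]
      show Multiplicative.toAdd ((h : G).right * (h : G).right) = (2 : ZMod 4)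
      rw [toAdd_mul]
      exact hkk
    rcases (mem_ker_iff _).1 hsq with h1 | h1
    · rw [h1] at hright
      have : (0 : ZMod 4) = 2 := hright
      exact absurd this (by decide)
    · have : z ∈ H := h1 ▸ pow_mem h.2 2
      exact hz this

end Stmt7Aux


/-- There exists a group of order 240 isomorphic to A₅ ⋊ C₄ with
G/Z(G) ≅ S₅ but with no subgroup isomorphic to S₅. -/
theorem stmt_7 : ∃ (G : Type) (inst : Group G), @Stmt7Prop G inst := by
  refine ⟨Stmt7Aux.G, inferInstance, Stmt7Aux.card_G, ⟨Stmt7Aux.φ, ⟨MulEquiv.refl _⟩⟩,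
    ⟨Stmt7Aux.f, Stmt7Aux.f_surj, Stmt7Aux.ker_eq_center⟩, Stmt7Aux.no_S5⟩
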